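/- With 𝒮ᵢ, ℛᵢ, 𝒯ᵢ the automorphisms of the pair (Fₙ, Mₙ) defined above, for 1 ≤ i ≤ n−1 the relation 𝒯_{i+1} ∘ 𝒮ᵢ = ℛᵢ ∘ 𝒮ᵢ⁻¹ ∘ ℛᵢ ∘ 𝒯ᵢ holds. -/

import Mathlib

/-- The free group `Fₙ` on generators `x₀, …, x_{n-1}` (0-based indexing). -/
abbrev FG (n : ℕ) := FreeGroup (Fin n)
/-- The group ring `ℤ[Fₙ]`. -/
abbrev GR (n : ℕ) := MonoidAlgebra ℤ (FG n)
/-- The free `ℤ[Fₙ]`-module `Mₙ` on `K₀, …, K_{n-1}`. -/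
abbrev M (n : ℕ) := Fin n →₀ GR n

/-- The generator `xᵢ`. -/
def X {n : ℕ} (i : Fin n) : FG n := FreeGroup.of i
/-- The module generator `Kᵢ`. -/
noncomputable def K {n : ℕ} (i : Fin n) : M n := Finsupp.single i 1

/-- The action `g ▷ m` of `Fₙ` on `Mₙ`, via the `ℤ[Fₙ]`-module structure. -/
noncomputable def act {n : ℕ} (g : FG n) (m : M n) : M n :=
  (MonoidAlgebra.of ℤ (FG n) g) • m

def fin0 (n i : ℕ) (h : i + 1 < n) : Fin n := ⟨i, Nat.lt_of_succ_lt h⟩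
def fin1 (n i : ℕ) (h : i + 1 < n) : Fin n := ⟨i + 1, h⟩

/-- The additive endomorphism of `Mₙ`, semilinear over the group endomorphism `f1`
(i.e. `m ↦ g ▷ m` goes to `m ↦ f1 g ▷ m`), determined by the images `t i` of the
generators `K i`. -/
noncomputable def lift2 {n : ℕ} (f1 : FG n →* FG n) (t : Fin n → M n) : M n →+ M n :=
  Finsupp.liftAddHom fun i =>
    { toFun := fun r => (MonoidAlgebra.mapDomainRingHom ℤ f1 r) • t i
      map_zero' := by simp
      map_add' := by intro a b; simp only [map_add, add_smul] }

/-- First component of the lifted Artin automorphism `𝒮ᵢ`. -/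
def S1 (n i : ℕ) (h : i + 1 < n) : FG n →* FG n :=
  FreeGroup.lift fun j =>
    if (j : ℕ) = i then X (fin1 n i h)
    else if (j : ℕ) = i + 1 then (X (fin1 n i h))⁻¹ * X (fin0 n i h) * X (fin1 n i h)
    else X j

/-- Second component of the lifted Artin automorphism `𝒮ᵢ`:
`Kᵢ ↦ Kᵢ + K_{i+1} − x_{i+1}⁻¹ ▷ Kᵢ`, `K_{i+1} ↦ x_{i+1}⁻¹ ▷ Kᵢ`, fixing other `Kⱼ`,
extended semilinearly over `𝒮ᵢ¹`. -/
noncomputable def S2 (n i : ℕ) (h : i + 1 < n) : M n →+ M n :=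
  lift2 (S1 n i h) fun j =>
    if (j : ℕ) = i then
      K (fin0 n i h) + K (fin1 n i h) - act (X (fin1 n i h))⁻¹ (K (fin0 n i h))
    else if (j : ℕ) = i + 1 then act (X (fin1 n i h))⁻¹ (K (fin0 n i h))
    else K j

/-- First component of the inverse `𝒮̄ᵢ`: `xᵢ ↦ xᵢ x_{i+1} xᵢ⁻¹`, `x_{i+1} ↦ xᵢ`. -/
def Sbar1 (n i : ℕ) (h : i + 1 < n) : FG n →* FG n :=
  FreeGroup.lift fun j =>
    if (j : ℕ) = i then X (fin0 n i h) * X (fin1 n i h) * (X (fin0 n i h))⁻¹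
    else if (j : ℕ) = i + 1 then X (fin0 n i h)
    else X j

/-- Second component of the inverse `𝒮̄ᵢ`: `Kᵢ ↦ xᵢ ▷ K_{i+1}`,
`K_{i+1} ↦ Kᵢ + K_{i+1} − xᵢ ▷ K_{i+1}`, fixing other `Kⱼ`. -/
noncomputable def Sbar2 (n i : ℕ) (h : i + 1 < n) : M n →+ M n :=
  lift2 (Sbar1 n i h) fun j =>
    if (j : ℕ) = i then act (X (fin0 n i h)) (K (fin1 n i h))
    else if (j : ℕ) = i + 1 then
      K (fin0 n i h) + K (fin1 n i h) - act (X (fin0 n i h)) (K (fin1 n i h))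
    else K j

/-- First component of the transposition automorphism `ℛᵢ`. -/
def R1 (n i : ℕ) (h : i + 1 < n) : FG n →* FG n :=
  FreeGroup.lift fun j =>
    if (j : ℕ) = i then X (fin1 n i h)
    else if (j : ℕ) = i + 1 then X (fin0 n i h)
    else X j

/-- Second component of `ℛᵢ`: swaps `Kᵢ` and `K_{i+1}`, fixing other `Kⱼ`. -/
noncomputable def R2 (n i : ℕ) (h : i + 1 < n) : M n →+ M n :=
  lift2 (R1 n i h) fun j =>
    if (j : ℕ) = i then K (fin1 n i h)
    else if (j : ℕ) = i + 1 then K (fin0 n i h)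
    else K j

/-- First component of the inversion automorphism `𝒯ᵢ`: `xᵢ ↦ xᵢ⁻¹`. -/
def T1 (n i : ℕ) (h : i < n) : FG n →* FG n :=
  FreeGroup.lift fun j => if (j : ℕ) = i then (X (⟨i, h⟩ : Fin n))⁻¹ else X j

/-- Second component of `𝒯ᵢ`: fixes each `Kⱼ`, extended semilinearly over `𝒯ᵢ¹`. -/
noncomputable def T2 (n i : ℕ) (h : i < n) : M n →+ M n :=
  lift2 (T1 n i h) fun j => K j


lemma lift2_single {n : ℕ} (f1 : FG n →* FG n) (t : Fin n → M n) (j : Fin n) (r : GR n) :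
    lift2 f1 t (Finsupp.single j r) = (MonoidAlgebra.mapDomainRingHom ℤ f1 r) • t j := by
  simp [lift2]

lemma lift2_K {n : ℕ} (f1 : FG n →* FG n) (t : Fin n → M n) (j : Fin n) :
    lift2 f1 t (K j) = t j := by
  simp [K, lift2_single]

lemma lift2_smul {n : ℕ} (f1 : FG n →* FG n) (t : Fin n → M n) (c : GR n) (m : M n) :
    lift2 f1 t (c • m) = (MonoidAlgebra.mapDomainRingHom ℤ f1 c) • lift2 f1 t m := by
  induction m using Finsupp.induction with
  | zero => simp
  | single_add j r s hj hr ih =>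
      rw [smul_add, map_add, map_add, smul_add, ih, Finsupp.smul_single, lift2_single,
        lift2_single, smul_eq_mul, map_mul, mul_smul]

lemma lift2_act {n : ℕ} (f1 : FG n →* FG n) (t : Fin n → M n) (g : FG n) (m : M n) :
    lift2 f1 t (act g m) = act (f1 g) (lift2 f1 t m) := by
  rw [act, lift2_smul, act]
  congr 1
  simp [MonoidAlgebra.of_apply, MonoidAlgebra.mapDomainRingHom_apply, Finsupp.mapDomain_single]

lemma mapDRH_comp {n : ℕ} (f g : FG n →* FG n) (r : GR n) :
    MonoidAlgebra.mapDomainRingHom ℤ f (MonoidAlgebra.mapDomainRingHom ℤ g r) =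
      MonoidAlgebra.mapDomainRingHom ℤ (f.comp g) r := by
  simp [MonoidAlgebra.mapDomainRingHom_apply, ← Finsupp.mapDomain_comp]

set_option maxHeartbeats 2000000 in
/-- relation `𝒯_{i+1} ∘ 𝒮ᵢ = ℛᵢ ∘ 𝒮ᵢ⁻¹ ∘ ℛᵢ ∘ 𝒯ᵢ` for automorphisms of the
pair `(Fₙ, Mₙ)`, where `𝒮ᵢ⁻¹ = 𝒮̄ᵢ` is the explicit inverse of `𝒮ᵢ`. -/
theorem liftedArtin_TS_relation (n i : ℕ) (h : i + 1 < n) :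
    (T1 n (i + 1) h).comp (S1 n i h) =
      (R1 n i h).comp ((Sbar1 n i h).comp ((R1 n i h).comp
        (T1 n i (Nat.lt_of_succ_lt h)))) ∧
    (T2 n (i + 1) h).comp (S2 n i h) =
      (R2 n i h).comp ((Sbar2 n i h).comp ((R2 n i h).comp
        (T2 n i (Nat.lt_of_succ_lt h)))) := by
  have hne : i ≠ i + 1 := Nat.ne_of_lt (Nat.lt_succ_self i)
  have hne' : i + 1 ≠ i := hne.symm
  have h1 : (T1 n (i + 1) h).comp (S1 n i h) =
      (R1 n i h).comp ((Sbar1 n i h).comp ((R1 n i h).comp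
        (T1 n i (Nat.lt_of_succ_lt h)))) := by
    apply FreeGroup.ext_hom
    intro j
    by_cases hj : (j : ℕ) = i
    · simp [S1, T1, R1, Sbar1, X, fin0, fin1, hj, hne, hne', MonoidHom.comp_apply]
    · by_cases hj' : (j : ℕ) = i + 1
      · simp [S1, T1, R1, Sbar1, X, fin0, fin1, hj, hj', hne, hne', MonoidHom.comp_apply]
      · simp [S1, T1, R1, Sbar1, X, fin0, fin1, hj, hj', hne, hne', MonoidHom.comp_apply]
  refine ⟨h1, ?_⟩
  apply Finsupp.addHom_ext
  intro j r
  have hsingle : (Finsupp.single j r : M n) = r • K j := by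
    simp [K, Finsupp.smul_single]
  simp only [AddMonoidHom.comp_apply, hsingle, S2, T2, R2, Sbar2, lift2_smul, mapDRH_comp]
  rw [h1]
  congr 1
  by_cases hj : (j : ℕ) = i
  · have hje : j = fin0 n i h := Fin.ext hj
    subst hje
    simp [lift2_K, lift2_act, map_add, map_sub, T1, R1, Sbar1, X, fin0, fin1, hne, hne',
      map_inv]
    abel
  · by_cases hj' : (j : ℕ) = i + 1
    · have hje : j = fin1 n i h := Fin.ext hj'
      subst hje
      simp [lift2_K, lift2_act, map_add, map_sub, T1, R1, Sbar1, X, fin0, fin1, hne, hne',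
        map_inv]
    · simp [lift2_K, lift2_act, T1, R1, Sbar1, X, fin0, fin1, hj, hj', hne, hne']
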